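/- arXiv:2205.02199 — 2 statements merged into one kernel-verified Lean document; each statement's English description precedes it below -/
import Mathlib

section
/- Given positive parameters λ, d, β, a, p, N, μ, c, s, φ and a positive integer m, the sequences defined by X_{n+1} = (λφ + X_n)/(1 + dφ + βφ V_n), Y_{n+1} = (Y_n + βφ X_{n-m+1} V_{n-m})/(1 + aφ + pφ Z_n), V_{n+1} = (V_n + aNφ Y_{n+1})/(1 + μφ), Z_{n+1} = (Z_n + cφ X_n Y_{n+1} Z_n)/(1 + sφ), with nonnegative initial data X_k, Y_k, V_k, Z_k for k = -m,...,0 and strictly positive values at k = 0, remain nonnegative for all n ≥ 0. -/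
theorem nsfd_positivity
    (lam d β a p N μ c s φ : ℝ)
    (hlam : 0 < lam) (hd : 0 < d) (hβ : 0 < β) (ha : 0 < a) (hp : 0 < p)
    (hN : 0 < N) (hμ : 0 < μ) (hc : 0 < c) (hs : 0 < s) (hφ : 0 < φ)
    (m : ℕ) (hm : 0 < m)
    (X Y V Z : ℤ → ℝ)
    (hX : ∀ n : ℤ, 0 ≤ n → X (n + 1) = (lam * φ + X n) / (1 + d * φ + β * φ * V n))
    (hY : ∀ n : ℤ, 0 ≤ n →
      Y (n + 1) = (Y n + β * φ * X (n - m + 1) * V (n - m)) / (1 + a * φ + p * φ * Z n))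
    (hV : ∀ n : ℤ, 0 ≤ n → V (n + 1) = (V n + a * N * φ * Y (n + 1)) / (1 + μ * φ))
    (hZ : ∀ n : ℤ, 0 ≤ n → Z (n + 1) = (Z n + c * φ * X n * Y (n + 1) * Z n) / (1 + s * φ))
    (hinit : ∀ k : ℤ, -(m : ℤ) ≤ k → k ≤ 0 → 0 ≤ X k ∧ 0 ≤ Y k ∧ 0 ≤ V k ∧ 0 ≤ Z k)
    (hpos0 : 0 < X 0 ∧ 0 < Y 0 ∧ 0 < V 0 ∧ 0 < Z 0) :
    ∀ n : ℤ, 0 ≤ n → 0 ≤ X n ∧ 0 ≤ Y n ∧ 0 ≤ V n ∧ 0 ≤ Z n := by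
  have key : ∀ n : ℤ, 0 ≤ n → ∀ k : ℤ, -(m : ℤ) ≤ k → k ≤ n →
      0 ≤ X k ∧ 0 ≤ Y k ∧ 0 ≤ V k ∧ 0 ≤ Z k := by
    intro n hn
    refine Int.le_induction (motive := fun n _ => ∀ k : ℤ, -(m : ℤ) ≤ k → k ≤ n →
      0 ≤ X k ∧ 0 ≤ Y k ∧ 0 ≤ V k ∧ 0 ≤ Z k) ?_ ?_ n hn
    · intro k hk1 hk2; exact hinit k hk1 hk2
    · intro n hn ih
      intro k hk1 hk2
      rcases lt_or_eq_of_le hk2 with h | h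
      · exact ih k hk1 (by omega)
      · subst h
        have hmn : -(m : ℤ) ≤ (0:ℤ) := by omega
        obtain ⟨hXn, hYn, hVn, hZn⟩ := ih n (by omega) le_rfl
        obtain ⟨hXm, _, _, _⟩ := ih (n - m + 1) (by omega) (by omega)
        obtain ⟨_, _, hVm, _⟩ := ih (n - m) (by omega) (by omega)
        have hX1 : 0 ≤ X (n + 1) := by
          rw [hX n hn]
          apply div_nonneg
          · have := mul_nonneg hlam.le hφ.le; linarith
          · have h1 := mul_nonneg (mul_nonneg hβ.le hφ.le) hVn
            have h2 := mul_nonneg hd.le hφ.le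
            linarith
        have hY1 : 0 ≤ Y (n + 1) := by
          rw [hY n hn]
          apply div_nonneg
          · have := mul_nonneg (mul_nonneg (mul_nonneg hβ.le hφ.le) hXm) hVm
            linarith
          · have h1 := mul_nonneg (mul_nonneg hp.le hφ.le) hZn
            have h2 := mul_nonneg ha.le hφ.le
            linarith
        have hV1 : 0 ≤ V (n + 1) := by
          rw [hV n hn]
          apply div_nonneg
          · have := mul_nonneg (mul_nonneg (mul_nonneg ha.le hN.le) hφ.le) hY1
            linarith
          · have := mul_nonneg hμ.le hφ.le; linarith
        have hZ1 : 0 ≤ Z (n + 1) := by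
          rw [hZ n hn]
          apply div_nonneg
          · have := mul_nonneg (mul_nonneg (mul_nonneg (mul_nonneg hc.le hφ.le) hXn) hY1) hZn
            linarith
          · have := mul_nonneg hs.le hφ.le; linarith
        exact ⟨hX1, hY1, hV1, hZ1⟩
  intro n hn
  exact key n hn n (by omega) le_rfl
end

section
/- If λcμ - βsaN > 0 and βaN(λcμ - βsaN) - adcμ² > 0, then the point Ē = ((λcμ - βsaN)/(dcμ), dμs/(λcμ - βsaN), saNd/(λcμ - βsaN), (βaN(λcμ - βsaN) - adcμ²)/(pdcμ²)) is a fixed point of the discrete NSFD HIV system, and all four of its coordinates are strictly positive. -/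
theorem Ebar_equilibrium
    (lam d β a p N μ c s φ : ℝ)
    (hlam : 0 < lam) (hd : 0 < d) (hβ : 0 < β) (ha : 0 < a) (hp : 0 < p)
    (hN : 0 < N) (hμ : 0 < μ) (hc : 0 < c) (hs : 0 < s) (hφ : 0 < φ)
    (h1 : 0 < lam * c * μ - β * s * a * N)
    (h2 : 0 < β * a * N * (lam * c * μ - β * s * a * N) - a * d * c * μ ^ 2) :
    let Xb := (lam * c * μ - β * s * a * N) / (d * c * μ)
    let Yb := d * μ * s / (lam * c * μ - β * s * a * N)
    let Vb := s * a * N * d / (lam * c * μ - β * s * a * N)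
    let Zb := (β * a * N * (lam * c * μ - β * s * a * N) - a * d * c * μ ^ 2) /
      (p * d * c * μ ^ 2)
    ((lam * φ + Xb) / (1 + d * φ + β * φ * Vb) = Xb ∧
     (Yb + β * φ * Xb * Vb) / (1 + a * φ + p * φ * Zb) = Yb ∧
     (Vb + a * N * φ * Yb) / (1 + μ * φ) = Vb ∧
     (Zb + c * φ * Xb * Yb * Zb) / (1 + s * φ) = Zb) ∧
    (0 < Xb ∧ 0 < Yb ∧ 0 < Vb ∧ 0 < Zb) := by
  intro Xb Yb Vb Zb
  have hXb : 0 < Xb := by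
    show 0 < (lam * c * μ - β * s * a * N) / (d * c * μ); positivity
  have hYb : 0 < Yb := by
    show 0 < d * μ * s / (lam * c * μ - β * s * a * N); positivity
  have hVb : 0 < Vb := by
    show 0 < s * a * N * d / (lam * c * μ - β * s * a * N); positivity
  have hZb : 0 < Zb := by
    show 0 < (β * a * N * (lam * c * μ - β * s * a * N) - a * d * c * μ ^ 2) /
      (p * d * c * μ ^ 2); positivity
  have hne : lam * c * μ - β * s * a * N ≠ 0 := ne_of_gt h1
  have hne2 : β * a * N * (lam * c * μ - β * s * a * N) - a * d * c * μ ^ 2 ≠ 0 := ne_of_gt h2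
  have hXY : c * Xb * Yb = s := by
    simp only [Xb, Yb]; field_simp
    exact div_self (by rw [mul_comm c lam]; exact hne)
  refine ⟨⟨?_, ?_, ?_, ?_⟩, hXb, hYb, hVb, hZb⟩
  case refine_4 =>
    rw [div_eq_iff (by positivity)]; linear_combination φ * Zb * hXY
  all_goals
    rw [div_eq_iff (by positivity)] <;>
    simp only [Xb, Yb, Vb, Zb] <;>
    field_simp <;>
    ring
end
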